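/- Let y_1,…,y_n ∈ U(L) be the images under ι of the standard basis vectors of V, and x_1,…,x_n ∈ U(L) the images of the dual basis vectors of V*. Let α be an element of the subalgebra of U(L) generated by ι(gl_n(k)) such that α commutes with ι(A) for every A ∈ gl_n(k). Then the element Σ_{i=1}^n (α·y_i − y_i·α)·x_i of U(L) commutes with ι(A) for every A ∈ gl_n(k). -/

import Mathlib

open Matrix

def CherLie (k : Type*) [Field k] (n : ℕ) : Type _ :=
  Matrix (Fin n) (Fin n) k × (Fin n → k) × (Fin n → k)

namespace CherLie

variable {k : Type*} [Field k] {n : ℕ}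

instance : AddCommGroup (CherLie k n) :=
  inferInstanceAs (AddCommGroup (Matrix (Fin n) (Fin n) k × (Fin n → k) × (Fin n → k)))

instance : Module k (CherLie k n) :=
  inferInstanceAs (Module k (Matrix (Fin n) (Fin n) k × (Fin n → k) × (Fin n → k)))

/-- The bracket `[(X₁,v₁,λ₁),(X₂,v₂,λ₂)] = ([X₁,X₂], X₁v₂ - X₂v₁, λ₁X₂ - λ₂X₁)`. -/
instance : Bracket (CherLie k n) (CherLie k n) :=
  ⟨fun a b =>
    (a.1 * b.1 - b.1 * a.1,
     a.1.mulVec b.2.1 - b.1.mulVec a.2.1,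
     vecMul a.2.2 b.1 - vecMul b.2.2 a.1)⟩

theorem bracket_def (a b : CherLie k n) :
    ⁅a, b⁆ = (a.1 * b.1 - b.1 * a.1,
      a.1.mulVec b.2.1 - b.1.mulVec a.2.1,
      vecMul a.2.2 b.1 - vecMul b.2.2 a.1) := rfl

private lemma vecMul_smul_right (x : Fin n → k) (t : k) (A : Matrix (Fin n) (Fin n) k) :
    vecMul x (t • A) = t • vecMul x A := by
  ext j
  simp [Matrix.vecMul, dotProduct, Finset.mul_sum, mul_left_comm]

instance : LieRing (CherLie k n) where
  add_lie a b c := by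
    refine Prod.ext ?_ (Prod.ext ?_ ?_)
    · show (a.1 + b.1) * c.1 - c.1 * (a.1 + b.1) =
        (a.1 * c.1 - c.1 * a.1) + (b.1 * c.1 - c.1 * b.1)
      noncomm_ring
    · show (a.1 + b.1).mulVec c.2.1 - c.1.mulVec (a.2.1 + b.2.1) =
        (a.1.mulVec c.2.1 - c.1.mulVec a.2.1) + (b.1.mulVec c.2.1 - c.1.mulVec b.2.1)
      simp only [Matrix.add_mulVec, Matrix.mulVec_add]
      abel
    · show vecMul (a.2.2 + b.2.2) c.1 - vecMul c.2.2 (a.1 + b.1) =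
        (vecMul a.2.2 c.1 - vecMul c.2.2 a.1) + (vecMul b.2.2 c.1 - vecMul c.2.2 b.1)
      simp only [Matrix.add_vecMul, Matrix.vecMul_add]
      abel
  lie_add a b c := by
    refine Prod.ext ?_ (Prod.ext ?_ ?_)
    · show a.1 * (b.1 + c.1) - (b.1 + c.1) * a.1 =
        (a.1 * b.1 - b.1 * a.1) + (a.1 * c.1 - c.1 * a.1)
      noncomm_ring
    · show a.1.mulVec (b.2.1 + c.2.1) - (b.1 + c.1).mulVec a.2.1 =
        (a.1.mulVec b.2.1 - b.1.mulVec a.2.1) + (a.1.mulVec c.2.1 - c.1.mulVec a.2.1)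
      simp only [Matrix.add_mulVec, Matrix.mulVec_add]
      abel
    · show vecMul a.2.2 (b.1 + c.1) - vecMul (b.2.2 + c.2.2) a.1 =
        (vecMul a.2.2 b.1 - vecMul b.2.2 a.1) + (vecMul a.2.2 c.1 - vecMul c.2.2 a.1)
      simp only [Matrix.add_vecMul, Matrix.vecMul_add]
      abel
  lie_self a := by
    refine Prod.ext ?_ (Prod.ext ?_ ?_) <;> simp [bracket_def] <;> rfl
  leibniz_lie a b c := by
    refine Prod.ext ?_ (Prod.ext ?_ ?_)
    · show a.1 * (b.1 * c.1 - c.1 * b.1) - (b.1 * c.1 - c.1 * b.1) * a.1 =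
        ((a.1 * b.1 - b.1 * a.1) * c.1 - c.1 * (a.1 * b.1 - b.1 * a.1)) +
          (b.1 * (a.1 * c.1 - c.1 * a.1) - (a.1 * c.1 - c.1 * a.1) * b.1)
      noncomm_ring
    · show a.1.mulVec (b.1.mulVec c.2.1 - c.1.mulVec b.2.1) -
          (b.1 * c.1 - c.1 * b.1).mulVec a.2.1 =
        ((a.1 * b.1 - b.1 * a.1).mulVec c.2.1 -
            c.1.mulVec (a.1.mulVec b.2.1 - b.1.mulVec a.2.1)) +
          (b.1.mulVec (a.1.mulVec c.2.1 - c.1.mulVec a.2.1) -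
            (a.1 * c.1 - c.1 * a.1).mulVec b.2.1)
      simp only [Matrix.mulVec_sub, Matrix.sub_mulVec, ← Matrix.mulVec_mulVec]
      abel
    · show vecMul a.2.2 (b.1 * c.1 - c.1 * b.1) -
          vecMul (vecMul b.2.2 c.1 - vecMul c.2.2 b.1) a.1 =
        ((vecMul (vecMul a.2.2 b.1 - vecMul b.2.2 a.1) c.1 -
            vecMul c.2.2 (a.1 * b.1 - b.1 * a.1)) +
          (vecMul b.2.2 (a.1 * c.1 - c.1 * a.1) -
            vecMul (vecMul a.2.2 c.1 - vecMul c.2.2 a.1) b.1))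
      simp only [Matrix.vecMul_sub, Matrix.sub_vecMul, Matrix.vecMul_vecMul]
      abel

instance : LieAlgebra k (CherLie k n) where
  lie_smul t a b := by
    refine Prod.ext ?_ (Prod.ext ?_ ?_)
    · show a.1 * (t • b.1) - (t • b.1) * a.1 = t • (a.1 * b.1 - b.1 * a.1)
      simp [mul_smul_comm, smul_mul_assoc, smul_sub]
    · show a.1.mulVec (t • b.2.1) - (t • b.1).mulVec a.2.1 =
        t • (a.1.mulVec b.2.1 - b.1.mulVec a.2.1)
      simp [Matrix.mulVec_smul, Matrix.smul_mulVec, smul_sub]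
    · show vecMul a.2.2 (t • b.1) - vecMul (t • b.2.2) a.1 =
        t • (vecMul a.2.2 b.1 - vecMul b.2.2 a.1)
      simp [Matrix.vecMul_smul, Matrix.smul_vecMul, vecMul_smul_right, smul_sub]


/-- Build an element of `L = gl_n(k) ⋉ (V ⊕ V*)` from a matrix `X ∈ gl_n(k)`, a column
vector `v ∈ V` and a row vector `l ∈ V*`. -/
def mk' (X : Matrix (Fin n) (Fin n) k) (v : Fin n → k) (l : Fin n → k) : CherLie k n :=
  (X, v, l)

end CherLie

section Aux

open CherLie

variable {k : Type*} [Field k] {n : ℕ}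

attribute [local instance] LieRing.ofAssociativeRing

/-- The linear map `v ↦ (0, v, 0)` into `CherLie k n`. -/
private def φV : (Fin n → k) →ₗ[k] CherLie k n where
  toFun v := mk' 0 v 0
  map_add' v w := by
    show ((0 : Matrix (Fin n) (Fin n) k), v + w, (0 : Fin n → k)) =
      ((0 : Matrix (Fin n) (Fin n) k), v, (0 : Fin n → k)) + (0, w, 0)
    show (_ : Matrix (Fin n) (Fin n) k × (Fin n → k) × (Fin n → k)) = (0 + 0, v + w, 0 + 0)
    simp
  map_smul' t v := by
    show ((0 : Matrix (Fin n) (Fin n) k), t • v, (0 : Fin n → k)) =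
      t • ((0 : Matrix (Fin n) (Fin n) k), v, (0 : Fin n → k))
    simp [Prod.ext_iff]

/-- The linear map `l ↦ (0, 0, l)` into `CherLie k n`. -/
private def φL : (Fin n → k) →ₗ[k] CherLie k n where
  toFun l := mk' 0 0 l
  map_add' v w := by
    show ((0 : Matrix (Fin n) (Fin n) k), (0 : Fin n → k), v + w) =
      ((0 : Matrix (Fin n) (Fin n) k), (0 : Fin n → k), v) + (0, 0, w)
    show (_ : Matrix (Fin n) (Fin n) k × (Fin n → k) × (Fin n → k)) = (0 + 0, 0 + 0, v + w)
    simp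
  map_smul' t v := by
    show ((0 : Matrix (Fin n) (Fin n) k), (0 : Fin n → k), t • v) =
      t • ((0 : Matrix (Fin n) (Fin n) k), (0 : Fin n → k), v)
    simp [Prod.ext_iff]

private lemma if_eq_single (i : Fin n) :
    (fun j => if i = j then (1 : k) else 0) = Pi.single i 1 := by
  ext m; simp [Pi.single_apply, eq_comm]

private lemma ι_mkv (v : Fin n → k) :
    UniversalEnvelopingAlgebra.ι k (CherLie.mk' (0 : Matrix (Fin n) (Fin n) k) v 0) =
      ∑ j, v j • UniversalEnvelopingAlgebra.ι k (CherLie.mk' 0 (Pi.single j 1) 0) := by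
  have h := LinearMap.pi_apply_eq_sum_univ
    (((UniversalEnvelopingAlgebra.ι k (L := CherLie k n)).toLinearMap).comp φV) v
  simp only [LinearMap.comp_apply, LieHom.coe_toLinearMap, if_eq_single] at h
  exact h

private lemma ι_mkl (v : Fin n → k) :
    UniversalEnvelopingAlgebra.ι k (CherLie.mk' (0 : Matrix (Fin n) (Fin n) k) 0 v) =
      ∑ j, v j • UniversalEnvelopingAlgebra.ι k (CherLie.mk' 0 0 (Pi.single j 1)) := by
  have h := LinearMap.pi_apply_eq_sum_univ
    (((UniversalEnvelopingAlgebra.ι k (L := CherLie k n)).toLinearMap).comp φL) v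
  simp only [LinearMap.comp_apply, LieHom.coe_toLinearMap, if_eq_single] at h
  exact h

private lemma commY (A : Matrix (Fin n) (Fin n) k) (i : Fin n) :
    UniversalEnvelopingAlgebra.ι k (CherLie.mk' A 0 0) *
        UniversalEnvelopingAlgebra.ι k (CherLie.mk' 0 (Pi.single i 1) 0) -
      UniversalEnvelopingAlgebra.ι k (CherLie.mk' 0 (Pi.single i 1) 0) *
        UniversalEnvelopingAlgebra.ι k (CherLie.mk' A 0 0) =
    ∑ j, A j i • UniversalEnvelopingAlgebra.ι k (CherLie.mk' 0 (Pi.single j 1) 0) := by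
  have h := (UniversalEnvelopingAlgebra.ι k (L := CherLie k n)).map_lie
    (CherLie.mk' A 0 0) (CherLie.mk' 0 (Pi.single i 1) 0)
  have hb : ⁅CherLie.mk' A 0 0, (CherLie.mk' 0 (Pi.single i 1) 0 : CherLie k n)⁆ =
      CherLie.mk' 0 (fun j => A j i) 0 := by
    rw [CherLie.bracket_def]
    refine Prod.ext (by simp [CherLie.mk']) (Prod.ext ?_ (by simp [CherLie.mk']))
    show A.mulVec (Pi.single i 1) - (0 : Matrix (Fin n) (Fin n) k).mulVec 0 = fun j => A j i
    ext j; simp [CherLie.mk']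
  rw [hb, Ring.lie_def] at h
  rw [← h, ι_mkv]

private lemma commX (A : Matrix (Fin n) (Fin n) k) (i : Fin n) :
    UniversalEnvelopingAlgebra.ι k (CherLie.mk' A 0 0) *
        UniversalEnvelopingAlgebra.ι k (CherLie.mk' 0 0 (Pi.single i 1)) -
      UniversalEnvelopingAlgebra.ι k (CherLie.mk' 0 0 (Pi.single i 1)) *
        UniversalEnvelopingAlgebra.ι k (CherLie.mk' A 0 0) =
    -∑ j, A i j • UniversalEnvelopingAlgebra.ι k (CherLie.mk' 0 0 (Pi.single j 1)) := by
  have h := (UniversalEnvelopingAlgebra.ι k (L := CherLie k n)).map_lie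
    (CherLie.mk' A 0 0) (CherLie.mk' 0 0 (Pi.single i 1))
  have hb : ⁅CherLie.mk' A 0 0, (CherLie.mk' 0 0 (Pi.single i 1) : CherLie k n)⁆ =
      CherLie.mk' 0 0 (-fun j => A i j) := by
    rw [CherLie.bracket_def]
    refine Prod.ext (by simp [CherLie.mk']) (Prod.ext (by simp [CherLie.mk']) ?_)
    show vecMul (0 : Fin n → k) (0 : Matrix (Fin n) (Fin n) k) - vecMul (Pi.single i 1) A =
      -fun j => A i j
    ext j; simp [CherLie.mk']
  rw [hb, Ring.lie_def] at h
  rw [← h, ι_mkl]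
  simp [neg_smul, Finset.sum_neg_distrib]

private lemma conj_comm {U : Type*} [Ring U] (a b c : U) (h : a * c = c * a) :
    c * (a * b - b * a) - (a * b - b * a) * c =
      a * (c * b - b * c) - (c * b - b * c) * a := by
  have h1 : c * (a * b) = a * (c * b) := by rw [← mul_assoc, ← h, mul_assoc]
  have h2 : b * a * c = b * c * a := by rw [mul_assoc, h, ← mul_assoc]
  calc c * (a * b - b * a) - (a * b - b * a) * c
      = c * (a * b) - c * (b * a) - (a * b * c - b * a * c) := by rw [mul_sub, sub_mul]
    _ = a * (c * b) - c * b * a - (a * (b * c) - b * c * a) := by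
        rw [h1, h2, ← mul_assoc c b a, mul_assoc a b c]
    _ = a * (c * b - b * c) - (c * b - b * c) * a := by
        rw [mul_sub, sub_mul]; abel

private lemma main_aux {k U : Type*} [CommRing k] [Ring U] [Algebra k U] {n : ℕ}
    (A : Matrix (Fin n) (Fin n) k) (α cA : U) (y x : Fin n → U)
    (hc : α * cA = cA * α)
    (hy : ∀ i, cA * y i - y i * cA = ∑ j, A j i • y j)
    (hx : ∀ i, cA * x i - x i * cA = -∑ j, A i j • x j) :
    (∑ i, (α * y i - y i * α) * x i) * cA = cA * ∑ i, (α * y i - y i * α) * x i := by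
  set β : Fin n → U := fun i => α * y i - y i * α with hβdef
  have hβ : ∀ i, cA * β i - β i * cA = ∑ j, A j i • β j := by
    intro i
    have := conj_comm α (y i) cA hc
    rw [hβdef]
    rw [this, hy i, Finset.mul_sum, Finset.sum_mul, ← Finset.sum_sub_distrib]
    refine Finset.sum_congr rfl fun j _ => ?_
    rw [mul_smul_comm, smul_mul_assoc, ← smul_sub]
  have hx' : ∀ i, x i * cA - cA * x i = ∑ j, A i j • x j := by
    intro i
    have := hx i
    have h2 : x i * cA - cA * x i = -(cA * x i - x i * cA) := by abel
    rw [h2, this, neg_neg]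
  have step : ∀ i, β i * x i * cA - cA * (β i * x i) =
      ∑ j, A i j • (β i * x j) - ∑ j, A j i • (β j * x i) := by
    intro i
    calc β i * x i * cA - cA * (β i * x i)
        = β i * (x i * cA - cA * x i) - (cA * β i - β i * cA) * x i := by noncomm_ring
      _ = β i * (∑ j, A i j • x j) - (∑ j, A j i • β j) * x i := by rw [hx' i, hβ i]
      _ = ∑ j, A i j • (β i * x j) - ∑ j, A j i • (β j * x i) := by
          rw [Finset.mul_sum, Finset.sum_mul]
          congr 1
          · exact Finset.sum_congr rfl fun j _ => (mul_smul_comm _ _ _)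
          · exact Finset.sum_congr rfl fun j _ => (smul_mul_assoc _ _ _)
  have key : (∑ i, β i * x i) * cA - cA * ∑ i, β i * x i = 0 := by
    rw [Finset.sum_mul, Finset.mul_sum, ← Finset.sum_sub_distrib]
    rw [Finset.sum_congr rfl fun i _ => step i, Finset.sum_sub_distrib]
    rw [Finset.sum_comm (f := fun i j => A j i • (β j * x i)), sub_self]
  exact sub_eq_zero.mp key

end Aux

/-- let `y_1, …, y_n` be the images under `ι : L → U(L)` of the standard
basis of `V` and `x_1, …, x_n` the images of the dual basis of `V*`, where
`L = gl_n(k) ⋉ (V ⊕ V*)`.  If `α` lies in the subalgebra of `U(L)` generated by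
`ι(gl_n(k))` and commutes with `ι(A)` for every `A ∈ gl_n(k)`, then
`∑ᵢ (α·yᵢ - yᵢ·α)·xᵢ` commutes with `ι(A)` for every `A ∈ gl_n(k)`. -/
theorem stmt_5 {k : Type*} [Field k] [IsAlgClosed k] [CharZero k] {n : ℕ} (hn : 1 ≤ n)
    (α : UniversalEnvelopingAlgebra k (CherLie k n))
    (hα : α ∈ Algebra.adjoin k
      (Set.range fun M : Matrix (Fin n) (Fin n) k =>
        UniversalEnvelopingAlgebra.ι k (CherLie.mk' M 0 0)))
    (hcomm : ∀ A : Matrix (Fin n) (Fin n) k,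
      α * UniversalEnvelopingAlgebra.ι k (CherLie.mk' A 0 0) =
        UniversalEnvelopingAlgebra.ι k (CherLie.mk' A 0 0) * α) :
    ∀ A : Matrix (Fin n) (Fin n) k,
      (∑ i : Fin n,
          (α * UniversalEnvelopingAlgebra.ι k (CherLie.mk' 0 (Pi.single i 1) 0) -
            UniversalEnvelopingAlgebra.ι k (CherLie.mk' 0 (Pi.single i 1) 0) * α) *
            UniversalEnvelopingAlgebra.ι k (CherLie.mk' 0 0 (Pi.single i 1))) *
          UniversalEnvelopingAlgebra.ι k (CherLie.mk' A 0 0) =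
        UniversalEnvelopingAlgebra.ι k (CherLie.mk' A 0 0) *
          ∑ i : Fin n,
            (α * UniversalEnvelopingAlgebra.ι k (CherLie.mk' 0 (Pi.single i 1) 0) -
              UniversalEnvelopingAlgebra.ι k (CherLie.mk' 0 (Pi.single i 1) 0) * α) *
              UniversalEnvelopingAlgebra.ι k (CherLie.mk' 0 0 (Pi.single i 1)) := by
  intro A
  exact main_aux A α (UniversalEnvelopingAlgebra.ι k (CherLie.mk' A 0 0))
    (fun i => UniversalEnvelopingAlgebra.ι k (CherLie.mk' 0 (Pi.single i 1) 0))
    (fun i => UniversalEnvelopingAlgebra.ι k (CherLie.mk' 0 0 (Pi.single i 1)))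
    (hcomm A) (fun i => commY A i) (fun i => commX A i)
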